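/- A monotone linear relation A : X → 2^X is paramonotone if and only if for all x ∈ dom A: (⟨x, x*⟩ = 0 for some/all x* ∈ Ax) implies Ax = A0. -/

import Mathlib

/-- A monotone linear relation is paramonotone iff ⟨x, Ax⟩ = 0 implies Ax = A0. -/
theorem linear_relation_paramonotone_iff
    {X : Type*} [NormedAddCommGroup X] [InnerProductSpace ℝ X] [CompleteSpace X]
    (A : X → Set X)
    (hlin : ∃ G : Submodule ℝ (X × X), ∀ x y, y ∈ A x ↔ (x, y) ∈ G)
    (hmono : ∀ x x' y y', x' ∈ A x → y' ∈ A y → (0:ℝ) ≤ inner ℝ (x - y) (x' - y')) :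
    (∀ x x' y y', x' ∈ A x → y' ∈ A y →
      (inner ℝ (x - y) (x' - y') : ℝ) = 0 → x' ∈ A y ∧ y' ∈ A x) ↔
    (∀ x x', x' ∈ A x → (inner ℝ x x' : ℝ) = 0 → A x = A 0) := by
  obtain ⟨G, hG⟩ := hlin
  have h0 : (0:X) ∈ A 0 := (hG 0 0).mpr G.zero_mem
  constructor
  · intro hpara x x' hx hinner
    have h := hpara x x' 0 0 hx h0 (by simpa using hinner)
    have hx0 : ((x, 0) : X × X) ∈ G := (hG x 0).mp h.2
    ext z
    constructor
    · intro hz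
      have hs := G.sub_mem ((hG x z).mp hz) hx0
      exact (hG 0 z).mpr (by simpa using hs)
    · intro hz
      have hs := G.add_mem ((hG 0 z).mp hz) hx0
      exact (hG x z).mpr (by simpa [add_comm] using hs)
  · intro h x x' y y' hx hy hinner
    have hd : x' - y' ∈ A (x - y) :=
      (hG _ _).mpr (G.sub_mem ((hG x x').mp hx) ((hG y y').mp hy))
    have heq := h _ _ hd hinner
    have h0' : (0:X) ∈ A (x - y) := heq ▸ h0
    have hxy0 : ((x - y, 0) : X × X) ∈ G := (hG _ _).mp h0'
    constructor
    · have hs := G.sub_mem ((hG x x').mp hx) hxy0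
      exact (hG y x').mpr (by simpa using hs)
    · have hs := G.add_mem ((hG y y').mp hy) hxy0
      exact (hG x y').mpr (by simpa [add_comm, sub_add_cancel] using hs)
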